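/- arXiv:1112.2909 — 6 statements merged into one kernel-verified Lean document; each statement's English description precedes it below -/
import Mathlib

section
/- Let (A, Δ) be a compact quantum semigroup admitting a Haar state h. Then the map u defined on the GNS space H_h ⊗ H_h by u(ā ⊗ b̄) = (Δ(a)(1 ⊗ b))‾ (where x̄ denotes the class of x in A/N_h) is a well-defined isometry. -/
open TensorProduct

/-- Let `(A, Δ)` be a compact quantum semigroup admitting a Haar state `h`.
Then `u(ā ⊗ b̄) = (Δ(a)(1 ⊗ b))‾` is a well-defined isometry on the GNS space `H_h ⊗ H_h`.

Mathlib has no minimal C*-tensor product nor GNS construction, so we work with the algebraic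
tensor product `A ⊗[ℂ] A`; the star operation on it (which does not exist in Mathlib) is
encoded by an additive map `st` with `st (a ⊗ b) = star a ⊗ star b`, and `Δ` being a unital
*-homomorphism is the hypothesis `Δ (star a) = st (Δ a)`.  Well-definedness and isometry of
`u` on the GNS space are equivalent to the preservation of the semi-inner products induced by
`h` (on `A`) and `h ⊗ h` (on `A ⊗ A`):
`⟨u(ā ⊗ b̄), u(ā' ⊗ b̄')⟩ = ⟨ā ⊗ b̄, ā' ⊗ b̄'⟩`, i.e.
`(h ⊗ h)((Δ a (1 ⊗ b))^* (Δ a' (1 ⊗ b'))) = h(a* a') h(b* b')`, where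
`(Δ a (1 ⊗ b))^* = (1 ⊗ b*) Δ(a*)`. -/
theorem gns_multiplicative_isometry_well_defined
    {A : Type*} [CStarAlgebra A]
    (Δ : A →ₐ[ℂ] A ⊗[ℂ] A)
    -- the star operation on the algebraic tensor product, and `Δ` is a *-homomorphism
    (st : A ⊗[ℂ] A → A ⊗[ℂ] A)
    (st_add : ∀ x y, st (x + y) = st x + st y)
    (st_tmul : ∀ a b : A, st (a ⊗ₜ[ℂ] b) = star a ⊗ₜ[ℂ] star b)
    (hΔstar : ∀ a, Δ (star a) = st (Δ a))
    -- coassociativity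
    (hcoassoc : ∀ a, (Algebra.TensorProduct.assoc ℂ ℂ ℂ A A A)
        ((Algebra.TensorProduct.map Δ (AlgHom.id ℂ A)) (Δ a))
      = (Algebra.TensorProduct.map (AlgHom.id ℂ A) Δ) (Δ a))
    -- `h` is a state
    (h : A →ₗ[ℂ] ℂ) (h_unital : h 1 = 1) (h_cont : Continuous h)
    (h_pos : ∀ a, 0 ≤ (h (star a * a)).re ∧ (h (star a * a)).im = 0)
    -- `h` is a Haar state: `(h ⊗ id) Δ a = h a • 1 = (id ⊗ h) Δ a`
    (hHaarL : ∀ a, TensorProduct.lift ((LinearMap.lsmul ℂ A).comp h) (Δ a) = h a • 1)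
    (hHaarR : ∀ a, TensorProduct.lift (((LinearMap.lsmul ℂ A).comp h).flip) (Δ a) = h a • 1) :
    -- `u` preserves the (h ⊗ h)-semi-inner product on elementary tensors
    ∀ a b a' b' : A,
      TensorProduct.lift (((LinearMap.mul ℂ ℂ).comp h).compl₂ h)
          ((((1 : A) ⊗ₜ[ℂ] star b) * Δ (star a)) * (Δ a' * ((1 : A) ⊗ₜ[ℂ] b')))
        = h (star a * a') * h (star b * b') := by
  intro a b a' b'
  set φ := TensorProduct.lift (((LinearMap.mul ℂ ℂ).comp h).compl₂ h) with hφ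
  set F := TensorProduct.lift ((LinearMap.lsmul ℂ A).comp h) with hF
  set g : A →ₗ[ℂ] ℂ :=
    h ∘ₗ (LinearMap.mulRight ℂ b') ∘ₗ (LinearMap.mulLeft ℂ (star b)) with hg
  have key : ∀ x : A ⊗[ℂ] A,
      φ (((1 : A) ⊗ₜ[ℂ] star b) * x * ((1 : A) ⊗ₜ[ℂ] b')) = g (F x) := by
    intro x
    induction x using TensorProduct.induction_on with
    | zero => simp
    | tmul x y =>
        simp [Algebra.TensorProduct.tmul_mul_tmul, hφ, hF, hg, mul_assoc]
    | add x y hx hy =>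
        rw [mul_add, add_mul, map_add, map_add, map_add, hx, hy]
  have hΔ : Δ (star a) * Δ a' = Δ (star a * a') := (map_mul Δ _ _).symm
  calc φ ((((1 : A) ⊗ₜ[ℂ] star b) * Δ (star a)) * (Δ a' * ((1 : A) ⊗ₜ[ℂ] b')))
      = φ (((1 : A) ⊗ₜ[ℂ] star b) * Δ (star a * a') * ((1 : A) ⊗ₜ[ℂ] b')) := by
        rw [← hΔ]; simp only [mul_assoc]
    _ = g (F (Δ (star a * a'))) := key _
    _ = h (star a * a') * h (star b * b') := by
        rw [hF, hHaarL, map_smul, hg]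
        simp [mul_one]
end

section
/- Let (A, Δ) be a compact quantum semigroup with Haar state h. The isometry u on H_h ⊗ H_h given by u(ā ⊗ b̄) = (Δ(a)(1 ⊗ b))‾ satisfies the pentagon equation u₁₂ u₁₃ u₂₃ = u₂₃ u₁₂. -/
open TensorProduct LinearMap

set_option synthInstance.maxHeartbeats 1000000
set_option maxHeartbeats 2000000

namespace CQGPentagonAux

variable {A : Type*} [CStarAlgebra A]

noncomputable def Uu (Δ : A →ₐ[ℂ] A ⊗[ℂ] A) : A ⊗[ℂ] A →ₗ[ℂ] A ⊗[ℂ] A :=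
  TensorProduct.lift
    (((LinearMap.mul ℂ (A ⊗[ℂ] A)).comp Δ.toLinearMap).compl₂ (TensorProduct.mk ℂ A A 1))

@[simp] lemma Uu_tmul (Δ : A →ₐ[ℂ] A ⊗[ℂ] A) (a b : A) :
    Uu Δ (a ⊗ₜ[ℂ] b) = Δ a * (1 ⊗ₜ[ℂ] b) := rfl

/-- The algebra associator agrees with the linear one. -/
lemma assoc_eq (t : (A ⊗[ℂ] A) ⊗[ℂ] A) :
    (Algebra.TensorProduct.assoc ℂ ℂ ℂ A A A) t = (TensorProduct.assoc ℂ A A A) t := by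
  induction t using TensorProduct.induction_on with
  | zero => rw [map_zero, map_zero]
  | tmul x z =>
    induction x using TensorProduct.induction_on with
    | zero => rw [zero_tmul, map_zero, map_zero]
    | tmul => rw [Algebra.TensorProduct.assoc_tmul, TensorProduct.assoc_tmul]
    | add p q hp hq => rw [add_tmul, map_add, map_add, hp, hq]
  | add p q hp hq => rw [map_add, map_add, hp, hq]

section
variable (Δ : A →ₐ[ℂ] A ⊗[ℂ] A)

/-- `σ₁₂ ∘ assoc⁻¹` on `y ⊗ v`. -/
lemma L0 (y : A) (v : A ⊗[ℂ] A) :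
    rTensor A (TensorProduct.comm ℂ A A).toLinearMap
        ((TensorProduct.assoc ℂ A A A).symm (y ⊗ₜ[ℂ] v))
      = rTensor A ((TensorProduct.mk ℂ A A).flip y) v := by
  induction v using TensorProduct.induction_on with
  | zero => simp
  | tmul p q => simp
  | add p q hp hq => simp [tmul_add, hp, hq]

/-- `U₂₃` on an elementary triple tensor. -/
lemma U23_tmul (a b c : A) :
    (TensorProduct.assoc ℂ A A A).symm
        (LinearMap.lTensor A (Uu Δ) ((TensorProduct.assoc ℂ A A A) ((a ⊗ₜ[ℂ] b) ⊗ₜ[ℂ] c)))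
      = (TensorProduct.assoc ℂ A A A).symm (a ⊗ₜ[ℂ] (Δ b * (1 ⊗ₜ[ℂ] c))) := by
  simp

lemma LB' (y z : A) (p : A ⊗[ℂ] A) :
    rTensor A ((TensorProduct.mk ℂ A A).flip y) (p * ((1:A) ⊗ₜ[ℂ] z))
      = rTensor A ((TensorProduct.mk ℂ A A).flip (1:A)) p * (((1:A) ⊗ₜ[ℂ] y) ⊗ₜ[ℂ] z) := by
  induction p using TensorProduct.induction_on with
  | zero => simp
  | tmul s t => simp [Algebra.TensorProduct.tmul_mul_tmul]
  | add p q hp hq => simp [add_mul, hp, hq]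

/-- `U₁₃` on `assoc⁻¹ (a ⊗ w)`. -/
lemma LB (a : A) (w : A ⊗[ℂ] A) :
    rTensor A (TensorProduct.comm ℂ A A).toLinearMap
        ((TensorProduct.assoc ℂ A A A).symm
          (LinearMap.lTensor A (Uu Δ)
            ((TensorProduct.assoc ℂ A A A)
              (rTensor A (TensorProduct.comm ℂ A A).toLinearMap
                ((TensorProduct.assoc ℂ A A A).symm (a ⊗ₜ[ℂ] w))))))
      = rTensor A ((TensorProduct.mk ℂ A A).flip (1:A)) (Δ a) *
          (TensorProduct.assoc ℂ A A A).symm ((1:A) ⊗ₜ[ℂ] w) := by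
  induction w using TensorProduct.induction_on with
  | zero => simp
  | tmul y z =>
    simp only [assoc_symm_tmul, rTensor_tmul, LinearEquiv.coe_coe, comm_tmul, assoc_tmul,
      lTensor_tmul, Uu_tmul]
    rw [L0, LB']
  | add p q hp hq =>
    simp only [tmul_add, map_add, mul_add] at hp hq ⊢
    rw [hp, hq]

lemma LC (p w : A ⊗[ℂ] A) :
    rTensor A (Uu Δ)
        (rTensor A ((TensorProduct.mk ℂ A A).flip (1:A)) p *
          (TensorProduct.assoc ℂ A A A).symm ((1:A) ⊗ₜ[ℂ] w))
      = (Algebra.TensorProduct.map Δ (AlgHom.id ℂ A)) p *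
          (TensorProduct.assoc ℂ A A A).symm ((1:A) ⊗ₜ[ℂ] w) := by
  induction p using TensorProduct.induction_on with
  | zero => simp
  | tmul s t =>
    induction w using TensorProduct.induction_on with
    | zero => simp
    | tmul y z => simp [Algebra.TensorProduct.tmul_mul_tmul, mul_assoc]
    | add v v' hv hv' =>
      simp only [tmul_add, map_add, mul_add] at hv hv' ⊢
      rw [hv, hv']
  | add p q hp hq =>
    simp only [map_add, add_mul] at hp hq ⊢
    rw [hp, hq]

lemma LE (s : A) (q w : A ⊗[ℂ] A) :
    (TensorProduct.assoc ℂ A A A).symm (s ⊗ₜ[ℂ] (q * w))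
      = (TensorProduct.assoc ℂ A A A).symm (s ⊗ₜ[ℂ] q) *
          (TensorProduct.assoc ℂ A A A).symm ((1:A) ⊗ₜ[ℂ] w) := by
  induction q using TensorProduct.induction_on with
  | zero => simp
  | tmul u v =>
    induction w using TensorProduct.induction_on with
    | zero => simp
    | tmul y z => simp [Algebra.TensorProduct.tmul_mul_tmul]
    | add w w' hw hw' =>
      simp only [tmul_add, mul_add, map_add] at hw hw' ⊢
      rw [hw, hw']
  | add q q' hq hq' =>
    simp only [tmul_add, add_mul, map_add] at hq hq' ⊢
    rw [hq, hq']

lemma LD (p : A ⊗[ℂ] A) (b c : A) :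
    (TensorProduct.assoc ℂ A A A).symm
        (LinearMap.lTensor A (Uu Δ)
          ((TensorProduct.assoc ℂ A A A) ((p * ((1:A) ⊗ₜ[ℂ] b)) ⊗ₜ[ℂ] c)))
      = (TensorProduct.assoc ℂ A A A).symm
            ((Algebra.TensorProduct.map (AlgHom.id ℂ A) Δ) p) *
          (TensorProduct.assoc ℂ A A A).symm ((1:A) ⊗ₜ[ℂ] (Δ b * (1 ⊗ₜ[ℂ] c))) := by
  induction p using TensorProduct.induction_on with
  | zero => simp
  | tmul s t =>
    rw [Algebra.TensorProduct.tmul_mul_tmul, mul_one, U23_tmul, map_mul, mul_assoc,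
      LE, Algebra.TensorProduct.map_tmul]
    rfl
  | add p q hp hq =>
    simp only [add_mul, add_tmul, map_add] at hp hq ⊢
    rw [hp, hq]

theorem pentagon (hcoassoc : ∀ a, (Algebra.TensorProduct.assoc ℂ ℂ ℂ A A A)
        ((Algebra.TensorProduct.map Δ (AlgHom.id ℂ A)) (Δ a))
      = (Algebra.TensorProduct.map (AlgHom.id ℂ A) Δ) (Δ a)) :
    LinearMap.rTensor A (Uu Δ) ∘ₗ
      (LinearMap.rTensor A (TensorProduct.comm ℂ A A).toLinearMap ∘ₗ
        ((TensorProduct.assoc ℂ A A A).symm.toLinearMap ∘ₗ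
          LinearMap.lTensor A (Uu Δ) ∘ₗ (TensorProduct.assoc ℂ A A A).toLinearMap) ∘ₗ
        LinearMap.rTensor A (TensorProduct.comm ℂ A A).toLinearMap) ∘ₗ
      ((TensorProduct.assoc ℂ A A A).symm.toLinearMap ∘ₗ
        LinearMap.lTensor A (Uu Δ) ∘ₗ (TensorProduct.assoc ℂ A A A).toLinearMap)
    = ((TensorProduct.assoc ℂ A A A).symm.toLinearMap ∘ₗ
        LinearMap.lTensor A (Uu Δ) ∘ₗ (TensorProduct.assoc ℂ A A A).toLinearMap) ∘ₗ
      LinearMap.rTensor A (Uu Δ) := by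
  refine TensorProduct.ext_threefold fun a b c => ?_
  simp only [LinearMap.comp_apply, LinearEquiv.coe_coe]
  rw [U23_tmul, LB, LC]
  have hR : LinearMap.rTensor A (Uu Δ) ((a ⊗ₜ[ℂ] b) ⊗ₜ[ℂ] c)
      = (Δ a * ((1:A) ⊗ₜ[ℂ] b)) ⊗ₜ[ℂ] c := by simp
  rw [hR, LD]
  have := hcoassoc a
  have h2 : (TensorProduct.assoc ℂ A A A).symm
      ((Algebra.TensorProduct.map (AlgHom.id ℂ A) Δ) (Δ a))
      = (Algebra.TensorProduct.map Δ (AlgHom.id ℂ A)) (Δ a) := by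
    rw [← this, assoc_eq]
    exact (TensorProduct.assoc ℂ A A A).symm_apply_apply _
  rw [h2]

end
end CQGPentagonAux



open TensorProduct

/-- Let `(A, Δ)` be a compact quantum semigroup with Haar state `h`.  The
isometry `u(ā ⊗ b̄) = (Δ(a)(1 ⊗ b))‾` on `H_h ⊗ H_h` satisfies the pentagon equation
`u₁₂ u₁₃ u₂₃ = u₂₃ u₁₂`.

As Mathlib has neither the minimal C*-tensor product nor the GNS construction, we work with
the algebraic tensor product: `u` is modelled by the linear map
`U : A ⊗ A → A ⊗ A, a ⊗ b ↦ Δ(a)(1 ⊗ b)` on the dense subspace `A ⊗ A` of `H_h ⊗ H_h`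
(on which the paper's computation takes place), `(A ⊗ A) ⊗ A` models the triple tensor
product, the legs are `U₁₂ = U ⊗ I`, `U₂₃ = I ⊗ U`, `U₁₃ = σ₁₂ U₂₃ σ₁₂` with `σ` the flip,
and the star operation on `A ⊗ A` is encoded by the additive map `st`. -/
theorem gns_isometry_pentagon
    {A : Type*} [CStarAlgebra A]
    (Δ : A →ₐ[ℂ] A ⊗[ℂ] A)
    (st : A ⊗[ℂ] A → A ⊗[ℂ] A)
    (st_add : ∀ x y, st (x + y) = st x + st y)
    (st_tmul : ∀ a b : A, st (a ⊗ₜ[ℂ] b) = star a ⊗ₜ[ℂ] star b)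
    (hΔstar : ∀ a, Δ (star a) = st (Δ a))
    (hcoassoc : ∀ a, (Algebra.TensorProduct.assoc ℂ ℂ ℂ A A A)
        ((Algebra.TensorProduct.map Δ (AlgHom.id ℂ A)) (Δ a))
      = (Algebra.TensorProduct.map (AlgHom.id ℂ A) Δ) (Δ a))
    -- `h` is a Haar state
    (h : A →ₗ[ℂ] ℂ) (h_unital : h 1 = 1) (h_cont : Continuous h)
    (h_pos : ∀ a, 0 ≤ (h (star a * a)).re ∧ (h (star a * a)).im = 0)
    (hHaarL : ∀ a, TensorProduct.lift ((LinearMap.lsmul ℂ A).comp h) (Δ a) = h a • 1)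
    (hHaarR : ∀ a, TensorProduct.lift (((LinearMap.lsmul ℂ A).comp h).flip) (Δ a) = h a • 1) :
    -- the pentagon equation for `U : a ⊗ b ↦ Δ(a)(1 ⊗ b)`
    letI U : A ⊗[ℂ] A →ₗ[ℂ] A ⊗[ℂ] A :=
      TensorProduct.lift
        (((LinearMap.mul ℂ (A ⊗[ℂ] A)).comp Δ.toLinearMap).compl₂ (TensorProduct.mk ℂ A A 1))
    letI assoc := (TensorProduct.assoc ℂ A A A).toLinearMap
    letI assoc' := (TensorProduct.assoc ℂ A A A).symm.toLinearMap
    letI σ : A ⊗[ℂ] A →ₗ[ℂ] A ⊗[ℂ] A := (TensorProduct.comm ℂ A A).toLinearMap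
    letI U₁₂ := LinearMap.rTensor A U
    letI U₂₃ := assoc' ∘ₗ LinearMap.lTensor A U ∘ₗ assoc
    letI σ₁₂ := LinearMap.rTensor A σ
    letI U₁₃ := σ₁₂ ∘ₗ U₂₃ ∘ₗ σ₁₂
    U₁₂ ∘ₗ U₁₃ ∘ₗ U₂₃ = U₂₃ ∘ₗ U₁₂ := by
  exact CQGPentagonAux.pentagon Δ hcoassoc
end

section
/- Let (A, Δ) be a compact quantum semigroup with Haar state h, π_h the GNS representation, and u the isometry on H_h ⊗ H_h defined by u(ā ⊗ b̄) = (Δ(a)(1 ⊗ b))‾. Then u*(π_h ⊗ π_h)(Δ(a)) u = π_h(a) ⊗ I for all a ∈ A. -/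
set_option maxRecDepth 4000


open TensorProduct

/-- Let `(A, Δ)` be a compact quantum semigroup with Haar state `h`, `π_h` the
GNS representation, and `u` the isometry on `H_h ⊗ H_h` with `u(ā ⊗ b̄) = (Δ(a)(1 ⊗ b))‾`.
Then `u* (π_h ⊗ π_h)(Δ a) u = π_h(a) ⊗ I` for all `a ∈ A`.

As Mathlib lacks both the minimal C*-tensor product and the GNS construction, we express this
operator identity through all its matrix coefficients on the dense subspace `A ⊗ A` of
`H_h ⊗ H_h` (which determine it, `u` being an isometry):
`⟨u(b̄ ⊗ c̄), (π_h ⊗ π_h)(Δ a) u(b̄' ⊗ c̄')⟩ = ⟨b̄ ⊗ c̄, (π_h(a) ⊗ I)(b̄' ⊗ c̄')⟩`, i.e.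
`(h ⊗ h)((Δ b (1 ⊗ c))^* · Δ a · Δ b' (1 ⊗ c')) = h(b* (a b')) h(c* c')`,
where `(Δ b (1 ⊗ c))^* = (1 ⊗ c*) Δ(b*)` and the star on `A ⊗ A` is encoded by `st`. -/
theorem gns_isometry_implements_comultiplication
    {A : Type*} [CStarAlgebra A]
    (Δ : A →ₐ[ℂ] A ⊗[ℂ] A)
    (st : A ⊗[ℂ] A → A ⊗[ℂ] A)
    (st_add : ∀ x y, st (x + y) = st x + st y)
    (st_tmul : ∀ a b : A, st (a ⊗ₜ[ℂ] b) = star a ⊗ₜ[ℂ] star b)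
    (hΔstar : ∀ a, Δ (star a) = st (Δ a))
    (hcoassoc : ∀ a, (Algebra.TensorProduct.assoc ℂ ℂ ℂ A A A)
        ((Algebra.TensorProduct.map Δ (AlgHom.id ℂ A)) (Δ a))
      = (Algebra.TensorProduct.map (AlgHom.id ℂ A) Δ) (Δ a))
    (h : A →ₗ[ℂ] ℂ) (h_unital : h 1 = 1) (h_cont : Continuous h)
    (h_pos : ∀ a, 0 ≤ (h (star a * a)).re ∧ (h (star a * a)).im = 0)
    (hHaarL : ∀ a, TensorProduct.lift ((LinearMap.lsmul ℂ A).comp h) (Δ a) = h a • 1)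
    (hHaarR : ∀ a, TensorProduct.lift (((LinearMap.lsmul ℂ A).comp h).flip) (Δ a) = h a • 1) :
    ∀ a b c b' c' : A,
      TensorProduct.lift (((LinearMap.mul ℂ ℂ).comp h).compl₂ h)
          ((((1 : A) ⊗ₜ[ℂ] star c) * Δ (star b)) * (Δ a * (Δ b' * ((1 : A) ⊗ₜ[ℂ] c'))))
        = h (star b * (a * b')) * h (star c * c') := by
  intro a b c b' c'
  have key : ∀ (p q : A) (t : A ⊗[ℂ] A),
      TensorProduct.lift (((LinearMap.mul ℂ ℂ).comp h).compl₂ h)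
          (((1 : A) ⊗ₜ[ℂ] p) * t * ((1 : A) ⊗ₜ[ℂ] q))
        = h (p * (TensorProduct.lift ((LinearMap.lsmul ℂ A).comp h) t) * q) := by
    intro p q t
    induction t using TensorProduct.induction_on with
    | zero => simp
    | tmul x y =>
        rw [Algebra.TensorProduct.tmul_mul_tmul, Algebra.TensorProduct.tmul_mul_tmul,
          TensorProduct.lift.tmul, TensorProduct.lift.tmul]
        simp only [LinearMap.compl₂_apply, LinearMap.coe_comp, Function.comp_apply,
          LinearMap.mul_apply', LinearMap.lsmul_apply, one_mul, mul_one,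
          mul_smul_comm, smul_mul_assoc, map_smul, smul_eq_mul]
    | add s t hs ht =>
        simp only [mul_add, add_mul, map_add, hs, ht]
  have hmul : (((1 : A) ⊗ₜ[ℂ] star c) * Δ (star b)) * (Δ a * (Δ b' * ((1 : A) ⊗ₜ[ℂ] c')))
      = ((1 : A) ⊗ₜ[ℂ] star c) * Δ (star b * (a * b')) * ((1 : A) ⊗ₜ[ℂ] c') := by
    simp [map_mul, mul_assoc]
  rw [hmul, key, hHaarL]
  simp [mul_assoc, mul_smul_comm, smul_mul_assoc]
end

section
/- Let S be the unilateral shift on ℓ²(ℕ). If a unitary u on H ⊗ H satisfies u(S ⊗ I) = (S ⊗ S)u, the pentagon equation, and u(e_0 ⊗ e_i) = e_0 ⊗ e_i for all i, then u(e_k ⊗ e_i) = e_k ⊗ e_{k+i} for all k, i ≥ 0; in particular the range of u is contained in the closed span of {e_i ⊗ e_j : j ≥ i}, contradicting surjectivity. -/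
/-- Let `S` be the unilateral shift on `ℓ²(ℕ)`.  If a unitary `u` on `H ⊗ H`
satisfies `u(S ⊗ I) = (S ⊗ S)u`, the pentagon equation, and `u(e₀ ⊗ e_i) = e₀ ⊗ e_i` for all
`i`, then `u(e_k ⊗ e_i) = e_k ⊗ e_{k+i}` for all `k, i ≥ 0`; in particular the range of `u`
is contained in the closed span of `{e_i ⊗ e_j : j ≥ i}`, contradicting surjectivity.

`H ⊗ H` and `H ⊗ H ⊗ H` are modelled by Hilbert spaces `HH`, `HHH` with Hilbert bases
`E : ℕ × ℕ → HH` and `F : ℕ × ℕ × ℕ → HHH`; the legs `u₁₂, u₂₃, u₁₃` are characterised by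
their matrix coefficients, and `S ⊗ I`, `S ⊗ S` by their action on the basis. -/
theorem shift_unitary_fixing_first_row_not_surjective
    {H HH HHH : Type*}
    [NormedAddCommGroup H] [InnerProductSpace ℂ H] [CompleteSpace H]
    [NormedAddCommGroup HH] [InnerProductSpace ℂ HH] [CompleteSpace HH]
    [NormedAddCommGroup HHH] [InnerProductSpace ℂ HHH] [CompleteSpace HHH]
    (e : HilbertBasis ℕ ℂ H) (E : HilbertBasis (ℕ × ℕ) ℂ HH)
    (F : HilbertBasis (ℕ × ℕ × ℕ) ℂ HHH)
    (S : H →L[ℂ] H) (hS : ∀ n, S (e n) = e (n + 1))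
    (S₁ SS : HH →L[ℂ] HH)
    (hS₁ : ∀ i j, S₁ (E (i, j)) = E (i + 1, j))
    (hSS : ∀ i j, SS (E (i, j)) = E (i + 1, j + 1))
    (u : HH →L[ℂ] HH) (hu : u ∈ unitary (HH →L[ℂ] HH))
    (u₁₂ u₁₃ u₂₃ : HHH →L[ℂ] HHH)
    (h12 : ∀ i j k a b c, (inner ℂ (F (i, j, k)) (u₁₂ (F (a, b, c))) : ℂ)
      = (if k = c then (1 : ℂ) else 0) * inner ℂ (E (i, j)) (u (E (a, b))))
    (h23 : ∀ i j k a b c, (inner ℂ (F (i, j, k)) (u₂₃ (F (a, b, c))) : ℂ)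
      = (if i = a then (1 : ℂ) else 0) * inner ℂ (E (j, k)) (u (E (b, c))))
    (h13 : ∀ i j k a b c, (inner ℂ (F (i, j, k)) (u₁₃ (F (a, b, c))) : ℂ)
      = (if j = b then (1 : ℂ) else 0) * inner ℂ (E (i, k)) (u (E (a, c))))
    -- the intertwining relation `u(S ⊗ I) = (S ⊗ S)u`, the pentagon equation, and
    -- `u(e₀ ⊗ e_i) = e₀ ⊗ e_i`
    (hint : u * S₁ = SS * u)
    (hpent : u₁₂ * u₁₃ * u₂₃ = u₂₃ * u₁₂)
    (hfix : ∀ i : ℕ, u (E (0, i)) = E (0, i)) :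
    (∀ k i : ℕ, u (E (k, i)) = E (k, k + i))
    ∧ (∀ v : HH, u v ∈
        (Submodule.span ℂ {w : HH | ∃ i j : ℕ, i ≤ j ∧ w = E (i, j)}).topologicalClosure)
    ∧ ¬ Function.Surjective u := by

  have hmain : ∀ k i : ℕ, u (E (k, i)) = E (k, k + i) := by
    intro k
    induction k with
    | zero => intro i; simpa using hfix i
    | succ n ih =>
      intro i
      have h1 : u (S₁ (E (n, i))) = SS (u (E (n, i))) := by
        have := DFunLike.congr_fun hint (E (n, i))
        simpa [ContinuousLinearMap.mul_apply] using this
      rw [hS₁, ih] at h1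
      rw [h1, hSS]
      have h2 : n + 1 + i = n + i + 1 := by omega
      rw [h2]
  set Sset : Set HH := {w : HH | ∃ i j : ℕ, i ≤ j ∧ w = E (i, j)} with hSset
  have hrange : ∀ v : HH, u v ∈ (Submodule.span ℂ Sset).topologicalClosure := by
    intro v
    have hv : v ∈ closure ((Submodule.span ℂ (Set.range E) : Submodule ℂ HH) : Set HH) := by
      rw [← Submodule.topologicalClosure_coe, E.dense_span]
      trivial
    have hmap : Set.MapsTo u ((Submodule.span ℂ (Set.range E) : Submodule ℂ HH) : Set HH)
        ((Submodule.span ℂ Sset : Submodule ℂ HH) : Set HH) := by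
      intro x hx
      induction hx using Submodule.span_induction with
      | mem w hw =>
        obtain ⟨⟨a, b⟩, rfl⟩ := hw
        refine Submodule.subset_span ?_
        exact ⟨a, a + b, by omega, (hmain a b)⟩
      | zero => simpa using (Submodule.span ℂ Sset).zero_mem
      | add x y _ _ hx hy => simpa using (Submodule.span ℂ Sset).add_mem hx hy
      | smul c x _ hx => simpa using (Submodule.span ℂ Sset).smul_mem c hx
    exact map_mem_closure u.continuous hv hmap
  refine ⟨hmain, hrange, ?_⟩
  intro hsurj
  obtain ⟨v, hv⟩ := hsurj (E (1, 0))
  have hmem : E (1, 0) ∈ (Submodule.span ℂ Sset).topologicalClosure := hv ▸ hrange v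
  have hker : (Submodule.span ℂ Sset).topologicalClosure ≤
      LinearMap.ker ((innerSL ℂ (E (1, 0)) : HH →L[ℂ] ℂ) : HH →ₗ[ℂ] ℂ) := by
    apply Submodule.topologicalClosure_minimal
    · rw [Submodule.span_le]
      rintro w ⟨i, j, hij, rfl⟩
      have : (inner ℂ (E (1, 0)) (E (i, j)) : ℂ) = 0 := by
        have horth := orthonormal_iff_ite.mp E.orthonormal (1, 0) (i, j)
        rw [horth]
        have : ((1 : ℕ), (0 : ℕ)) ≠ (i, j) := by
          intro h; injection h with h1 h2; omega
        simp [this]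
      simpa [LinearMap.mem_ker] using this
    · exact ContinuousLinearMap.isClosed_ker (innerSL ℂ (E (1, 0)))
  have h0 : (inner ℂ (E (1, 0)) (E (1, 0)) : ℂ) = 0 := by
    simpa [LinearMap.mem_ker] using hker hmem
  have h1 : (inner ℂ (E (1, 0)) (E (1, 0)) : ℂ) = 1 := by
    have := orthonormal_iff_ite.mp E.orthonormal (1, 0) (1, 0)
    simpa using this
  rw [h1] at h0
  exact one_ne_zero h0
end

section
/- Let A be a unital C*-algebra and W : A ⊗ A → A ⊗ A a unital *-homomorphism satisfying the pentagon equation W₁₂ W₁₃ W₂₃ = W₂₃ W₁₂ (as linear operators on A ⊗ A ⊗ A). Then Δ := W ∘ Δᴸ, where Δᴸ(a) = a ⊗ 1, is a coassociative comultiplication on A: (Δ ⊗ id)Δ = (id ⊗ Δ)Δ. -/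
open TensorProduct
set_option maxHeartbeats 1000000
set_option synthInstance.maxHeartbeats 400000

/-- Let `A` be a unital C*-algebra and `W : A ⊗ A → A ⊗ A` a unital
*-homomorphism satisfying the pentagon equation `W₁₂ W₁₃ W₂₃ = W₂₃ W₁₂` (as linear
operators on `A ⊗ A ⊗ A`).  Then `Δ := W ∘ Δᴸ`, `Δᴸ(a) = a ⊗ 1`, is a coassociative
comultiplication on `A`.

The tensor product is the algebraic one (Mathlib has no minimal C*-tensor product), the star
operation on `A ⊗ A` is encoded by the additive map `st` (so `W` being a *-homomorphism is
`W ∘ st = st ∘ W`), the triple tensor product is `(A ⊗ A) ⊗ A`, the legs are obtained with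
`rTensor`/`lTensor`, the associator and the flip `Σ`, and coassociativity is stated up to
the associator. -/
theorem pentagon_homomorphism_gives_comultiplication
    {A : Type*} [CStarAlgebra A]
    (W : A ⊗[ℂ] A →ₐ[ℂ] A ⊗[ℂ] A)
    (st : A ⊗[ℂ] A → A ⊗[ℂ] A)
    (st_add : ∀ x y, st (x + y) = st x + st y)
    (st_tmul : ∀ a b : A, st (a ⊗ₜ[ℂ] b) = star a ⊗ₜ[ℂ] star b)
    (hWstar : ∀ x, W (st x) = st (W x))
    (hpent :
      letI assoc := (TensorProduct.assoc ℂ A A A).toLinearMap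
      letI assoc' := (TensorProduct.assoc ℂ A A A).symm.toLinearMap
      letI σ : A ⊗[ℂ] A →ₗ[ℂ] A ⊗[ℂ] A := (TensorProduct.comm ℂ A A).toLinearMap
      letI W₁₂ := LinearMap.rTensor A W.toLinearMap
      letI W₂₃ := assoc' ∘ₗ LinearMap.lTensor A W.toLinearMap ∘ₗ assoc
      letI σ₁₂fl := LinearMap.rTensor A σ
      letI W₁₃ := σ₁₂fl ∘ₗ W₂₃ ∘ₗ σ₁₂fl
      W₁₂ ∘ₗ W₁₃ ∘ₗ W₂₃ = W₂₃ ∘ₗ W₁₂) :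
    letI Δ : A →ₐ[ℂ] A ⊗[ℂ] A :=
      W.comp (Algebra.TensorProduct.includeLeft : A →ₐ[ℂ] A ⊗[ℂ] A)
    ∀ a, (Algebra.TensorProduct.assoc ℂ ℂ ℂ A A A)
        ((Algebra.TensorProduct.map Δ (AlgHom.id ℂ A)) (Δ a))
      = (Algebra.TensorProduct.map (AlgHom.id ℂ A) Δ) (Δ a) := by
  intro a
  have hone : W ((1:A) ⊗ₜ[ℂ] (1:A)) = (1:A) ⊗ₜ[ℂ] (1:A) := by
    rw [← Algebra.TensorProduct.one_def, map_one]
  have hp := congrArg (fun f => f ((a ⊗ₜ[ℂ] (1:A)) ⊗ₜ[ℂ] (1:A))) hpent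
  simp only [LinearMap.comp_apply, LinearMap.rTensor_tmul, LinearMap.lTensor_tmul,
    LinearEquiv.coe_coe, TensorProduct.assoc_tmul, TensorProduct.assoc_symm_tmul,
    TensorProduct.comm_tmul, AlgHom.toLinearMap_apply, hone] at hp
  -- abbreviations
  let ι : A →ₗ[ℂ] A ⊗[ℂ] A := (TensorProduct.mk ℂ A A).flip 1
  let F : A →ₗ[ℂ] A ⊗[ℂ] A := W.toLinearMap ∘ₗ ι
  have hιa : ∀ b : A, ι b = b ⊗ₜ[ℂ] 1 := fun b => rfl
  have hFb : ∀ b : A, F b = W (b ⊗ₜ[ℂ] 1) := fun b => rfl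
  have S1 : ∀ u : A ⊗[ℂ] A,
      (LinearMap.rTensor A ((TensorProduct.comm ℂ A A : A ⊗[ℂ] A ≃ₗ[ℂ] A ⊗[ℂ] A) : A ⊗[ℂ] A →ₗ[ℂ] A ⊗[ℂ] A))
        ((TensorProduct.assoc ℂ A A A).symm ((1:A) ⊗ₜ[ℂ] u)) = LinearMap.rTensor A ι u := by
    intro u
    induction u using TensorProduct.induction_on with
    | zero => simp only [tmul_zero, map_zero]
    | tmul b c => simp [hιa]
    | add x y hx hy => simp only [tmul_add, map_add, hx, hy]
  have S2 : ∀ u : A ⊗[ℂ] A,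
      LinearMap.lTensor A W.toLinearMap ((TensorProduct.assoc ℂ A A A) (u ⊗ₜ[ℂ] (1:A)))
        = LinearMap.lTensor A F u := by
    intro u
    induction u using TensorProduct.induction_on with
    | zero => simp
    | tmul b c => simp [hFb]
    | add x y hx hy => simp only [add_tmul, map_add, hx, hy]
  rw [S1, S2] at hp
  rw [show LinearMap.rTensor A W.toLinearMap (LinearMap.rTensor A ι (W (a ⊗ₜ[ℂ] 1)))
      = LinearMap.rTensor A F (W (a ⊗ₜ[ℂ] 1)) by
    rw [show F = W.toLinearMap ∘ₗ ι from rfl, LinearMap.rTensor_comp, LinearMap.comp_apply]] at hp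
  have hkey : (TensorProduct.assoc ℂ A A A) (LinearMap.rTensor A F (W (a ⊗ₜ[ℂ] 1)))
      = LinearMap.lTensor A F (W (a ⊗ₜ[ℂ] 1)) := by
    rw [hp, LinearEquiv.apply_symm_apply]
  -- identify the algebraic maps with the linear ones
  have hassoc : ∀ z : (A ⊗[ℂ] A) ⊗[ℂ] A,
      Algebra.TensorProduct.assoc ℂ ℂ ℂ A A A z = TensorProduct.assoc ℂ A A A z := by
    intro z
    induction z using TensorProduct.induction_on with
    | zero => simp
    | tmul x c =>
      induction x using TensorProduct.induction_on with
      | zero => simp [zero_tmul]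
      | tmul b b' => simp
      | add x y hx hy => simp only [add_tmul, map_add, hx, hy]
    | add x y hx hy => simp only [map_add, hx, hy]
  have hmap1 : ∀ u : A ⊗[ℂ] A,
      (Algebra.TensorProduct.map (W.comp (Algebra.TensorProduct.includeLeft : A →ₐ[ℂ] A ⊗[ℂ] A))
        (AlgHom.id ℂ A)) u = LinearMap.rTensor A F u := by
    intro u
    induction u using TensorProduct.induction_on with
    | zero => simp
    | tmul b c => simp [hFb]
    | add x y hx hy => simp only [map_add, hx, hy]
  have hmap2 : ∀ u : A ⊗[ℂ] A,
      (Algebra.TensorProduct.map (AlgHom.id ℂ A)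
        (W.comp (Algebra.TensorProduct.includeLeft : A →ₐ[ℂ] A ⊗[ℂ] A))) u
        = LinearMap.lTensor A F u := by
    intro u
    induction u using TensorProduct.induction_on with
    | zero => simp
    | tmul b c => simp [hFb]
    | add x y hx hy => simp only [map_add, hx, hy]
  show Algebra.TensorProduct.assoc ℂ ℂ ℂ A A A
      ((Algebra.TensorProduct.map (W.comp (Algebra.TensorProduct.includeLeft : A →ₐ[ℂ] A ⊗[ℂ] A))
        (AlgHom.id ℂ A)) ((W.comp (Algebra.TensorProduct.includeLeft : A →ₐ[ℂ] A ⊗[ℂ] A)) a))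
      = (Algebra.TensorProduct.map (AlgHom.id ℂ A)
        (W.comp (Algebra.TensorProduct.includeLeft : A →ₐ[ℂ] A ⊗[ℂ] A)))
        ((W.comp (Algebra.TensorProduct.includeLeft : A →ₐ[ℂ] A ⊗[ℂ] A)) a)
  have hΔa : (W.comp (Algebra.TensorProduct.includeLeft : A →ₐ[ℂ] A ⊗[ℂ] A)) a
      = W (a ⊗ₜ[ℂ] 1) := rfl
  rw [hΔa, hmap1, hmap2, hassoc, hkey]
end

section
/- Let A be a unital C*-algebra and W : A ⊗ A → A ⊗ A a unital *-homomorphism satisfying the pentagon equation. Then the map Δ̂ := Σ W Σ ∘ Δᴿ, where Δᴿ(a) = 1 ⊗ a and Σ is the flip on A ⊗ A, is a coassociative comultiplication on A. -/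
open TensorProduct

/-- Let `A` be a unital C*-algebra and `W : A ⊗ A → A ⊗ A` a unital
*-homomorphism satisfying the pentagon equation.  Then `Δ̂ := Σ W Σ ∘ Δᴿ`, where
`Δᴿ(a) = 1 ⊗ a` and `Σ` is the flip on `A ⊗ A`, is a coassociative comultiplication on `A`.

The tensor product is the algebraic one (Mathlib has no minimal C*-tensor product), the star
operation on `A ⊗ A` is encoded by the additive map `st`, and the legs/associators are as in
the usual multiplicative-unitary conventions. -/
theorem pentagon_homomorphism_gives_flipped_comultiplication
    {A : Type*} [CStarAlgebra A]
    (W : A ⊗[ℂ] A →ₐ[ℂ] A ⊗[ℂ] A)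
    (st : A ⊗[ℂ] A → A ⊗[ℂ] A)
    (st_add : ∀ x y, st (x + y) = st x + st y)
    (st_tmul : ∀ a b : A, st (a ⊗ₜ[ℂ] b) = star a ⊗ₜ[ℂ] star b)
    (hWstar : ∀ x, W (st x) = st (W x))
    (hpent :
      letI assoc := (TensorProduct.assoc ℂ A A A).toLinearMap
      letI assoc' := (TensorProduct.assoc ℂ A A A).symm.toLinearMap
      letI σ : A ⊗[ℂ] A →ₗ[ℂ] A ⊗[ℂ] A := (TensorProduct.comm ℂ A A).toLinearMap
      letI W₁₂ := LinearMap.rTensor A W.toLinearMap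
      letI W₂₃ := assoc' ∘ₗ LinearMap.lTensor A W.toLinearMap ∘ₗ assoc
      letI σ₁₂fl := LinearMap.rTensor A σ
      letI W₁₃ := σ₁₂fl ∘ₗ W₂₃ ∘ₗ σ₁₂fl
      W₁₂ ∘ₗ W₁₃ ∘ₗ W₂₃ = W₂₃ ∘ₗ W₁₂) :
    letI Δhat : A →ₐ[ℂ] A ⊗[ℂ] A :=
      ((Algebra.TensorProduct.comm ℂ A A).toAlgHom.comp
          (W.comp (Algebra.TensorProduct.comm ℂ A A).toAlgHom)).comp
        (Algebra.TensorProduct.includeRight : A →ₐ[ℂ] A ⊗[ℂ] A)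
    ∀ a, (Algebra.TensorProduct.assoc ℂ ℂ ℂ A A A)
        ((Algebra.TensorProduct.map Δhat (AlgHom.id ℂ A)) (Δhat a))
      = (Algebra.TensorProduct.map (AlgHom.id ℂ A) Δhat) (Δhat a) := by
  intro a
  set Δhat : A →ₐ[ℂ] A ⊗[ℂ] A :=
    ((Algebra.TensorProduct.comm ℂ A A).toAlgHom.comp
        (W.comp (Algebra.TensorProduct.comm ℂ A A).toAlgHom)).comp
      (Algebra.TensorProduct.includeRight : A →ₐ[ℂ] A ⊗[ℂ] A) with hΔdef
  -- abbreviations matching the pentagon hypothesis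
  have commAlg_eq : ∀ z : A ⊗[ℂ] A,
      (Algebra.TensorProduct.comm ℂ A A) z = (TensorProduct.comm ℂ A A) z := by
    intro z
    induction z using TensorProduct.induction_on with
    | zero => simp
    | tmul x y => simp
    | add x y hx hy => rw [map_add, map_add, hx, hy]
  set σ : A ⊗[ℂ] A →ₗ[ℂ] A ⊗[ℂ] A := (TensorProduct.comm ℂ A A).toLinearMap with hσ
  set asc := (TensorProduct.assoc ℂ A A A).toLinearMap with hasc
  set asc' := (TensorProduct.assoc ℂ A A A).symm.toLinearMap with hasc'
  set W₁₂ := LinearMap.rTensor A W.toLinearMap with hW12def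
  set W₂₃ := asc' ∘ₗ LinearMap.lTensor A W.toLinearMap ∘ₗ asc with hW23def
  set σf := LinearMap.rTensor A σ with hσf
  set W₁₃ := σf ∘ₗ W₂₃ ∘ₗ σf with hW13def
  have hp : ∀ z, W₁₂ (W₁₃ (W₂₃ z)) = W₂₃ (W₁₂ z) := fun z =>
    LinearMap.congr_fun hpent z
  set φ : (A ⊗[ℂ] A) ⊗[ℂ] A →ₗ[ℂ] A ⊗[ℂ] (A ⊗[ℂ] A) :=
    (TensorProduct.comm ℂ (A ⊗[ℂ] A) A).toLinearMap ∘ₗ σf with hφ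
  have hΔ : ∀ p : A, Δhat p = σ (W (p ⊗ₜ[ℂ] (1 : A))) := by
    intro p
    simp only [hΔdef, AlgHom.comp_apply, AlgEquiv.toAlgHom_eq_coe, AlgHom.coe_coe,
      Algebra.TensorProduct.includeRight_apply, Algebra.TensorProduct.comm_tmul,
      commAlg_eq, hσ, LinearEquiv.coe_coe, TensorProduct.comm_tmul, AlgEquiv.toAlgHom_apply]
  have helper1 : ∀ (w : A ⊗[ℂ] A) (p : A),
      (Algebra.TensorProduct.assoc ℂ ℂ ℂ A A A) ((σ w) ⊗ₜ[ℂ] p)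
        = φ (asc' (p ⊗ₜ[ℂ] w)) := by
    intro w p
    induction w using TensorProduct.induction_on with
    | zero => simp
    | tmul c d =>
        simp [hφ, hσ, hasc', hσf, Algebra.TensorProduct.assoc_tmul]
    | add x y hx hy =>
        rw [map_add, TensorProduct.add_tmul, map_add, TensorProduct.tmul_add,
          map_add, map_add, hx, hy]
  have helper2 : ∀ (v : A ⊗[ℂ] A) (q : A), φ (v ⊗ₜ[ℂ] q) = q ⊗ₜ[ℂ] (σ v) := by
    intro v q
    simp [hφ, hσf]
  have key1 : ∀ v : A ⊗[ℂ] A,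
      (Algebra.TensorProduct.assoc ℂ ℂ ℂ A A A)
          ((Algebra.TensorProduct.map Δhat (AlgHom.id ℂ A)) (σ v))
        = φ (W₂₃ (v ⊗ₜ[ℂ] (1 : A))) := by
    intro v
    induction v using TensorProduct.induction_on with
    | zero => simp
    | tmul p q =>
        have h1 : σ (p ⊗ₜ[ℂ] q) = q ⊗ₜ[ℂ] p := by simp [hσ]
        rw [h1, Algebra.TensorProduct.map_tmul, AlgHom.coe_id, id_eq, hΔ q, helper1]
        congr 1
    | add x y hx hy =>
        rw [map_add, TensorProduct.add_tmul, map_add, map_add, map_add, map_add, hx, hy]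
  have key2 : ∀ v : A ⊗[ℂ] A,
      (Algebra.TensorProduct.map (AlgHom.id ℂ A) Δhat) (σ v)
        = φ (W₁₂ (σf (asc' ((1 : A) ⊗ₜ[ℂ] v)))) := by
    intro v
    induction v using TensorProduct.induction_on with
    | zero => simp
    | tmul p q =>
        have h1 : σ (p ⊗ₜ[ℂ] q) = q ⊗ₜ[ℂ] p := by simp [hσ]
        have h2 : σf (asc' ((1 : A) ⊗ₜ[ℂ] (p ⊗ₜ[ℂ] q))) = (p ⊗ₜ[ℂ] (1 : A)) ⊗ₜ[ℂ] q := by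
          simp [hasc', hσf, hσ]
        rw [h1, Algebra.TensorProduct.map_tmul, AlgHom.coe_id, id_eq, hΔ p, h2,
          hW12def, LinearMap.rTensor_tmul, helper2]
        rfl
    | add x y hx hy =>
        rw [map_add, TensorProduct.tmul_add, map_add, map_add, map_add, map_add,
          map_add, hx, hy]
  -- pentagon applied at (a ⊗ 1) ⊗ 1
  set u : A ⊗[ℂ] A := W (a ⊗ₜ[ℂ] (1 : A)) with hu
  have hone : W ((1 : A) ⊗ₜ[ℂ] (1 : A)) = (1 : A) ⊗ₜ[ℂ] (1 : A) := by
    rw [← Algebra.TensorProduct.one_def, map_one]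
  have hW23x : W₂₃ ((a ⊗ₜ[ℂ] (1 : A)) ⊗ₜ[ℂ] (1 : A)) = (a ⊗ₜ[ℂ] (1 : A)) ⊗ₜ[ℂ] (1 : A) := by
    simp [hW23def, hasc, hasc', hone]
  have hW13x : W₁₃ ((a ⊗ₜ[ℂ] (1 : A)) ⊗ₜ[ℂ] (1 : A)) = σf (asc' ((1 : A) ⊗ₜ[ℂ] u)) := by
    simp only [hW13def, LinearMap.comp_apply]
    congr 1
  have hW12x : W₁₂ ((a ⊗ₜ[ℂ] (1 : A)) ⊗ₜ[ℂ] (1 : A)) = u ⊗ₜ[ℂ] (1 : A) := by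
    simp [hW12def, hu]
  have hpent_u : W₁₂ (σf (asc' ((1 : A) ⊗ₜ[ℂ] u))) = W₂₃ (u ⊗ₜ[ℂ] (1 : A)) := by
    have := hp ((a ⊗ₜ[ℂ] (1 : A)) ⊗ₜ[ℂ] (1 : A))
    rwa [hW23x, hW13x, hW12x] at this
  rw [hΔ a, key1 u, key2 u, hpent_u]
end
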